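/- Let P(x_1,…,x_n) be a symmetric polynomial in n variables over a field of characteristic zero, set F(x_1,…,x_n) = P(x_1,…,x_n) · ∏_{i≠j} (x_i − x_j) · ∏_{i<j} (x_i + x_j), and let Q(x) = ∏_{i=1}^n (x − λ_i)(x + λ_i). Then the sum, over all n-tuples (α_1,…,α_n) of roots of Q, of F(α_1,…,α_n) / (Q'(α_1)⋯Q'(α_n)) equals n! · Σ_{I ⊆ {1,…,n}} F(λ_I) / (Q'(λ_{1,I})⋯Q'(λ_{n,I})). (Tuples containing a repeated root, or containing both λ_i and −λ_i for some i, contribute zero because F vanishes there.) -/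
import Mathlib
open Finset

lemma prod_Ioi_pairs {M : Type*} [CommMonoid M] {n : ℕ} (f : Fin n → Fin n → M) :
    ∏ i : Fin n, ∏ j ∈ Ioi i, f i j
      = ∏ p ∈ (univ ×ˢ univ).filter (fun p : Fin n × Fin n => p.1 < p.2), f p.1 p.2 := by
  rw [Finset.prod_sigma' univ (fun i => Ioi i) f]
  apply Finset.prod_nbij' (fun x => (x.1, x.2)) (fun p => (⟨p.1, p.2⟩ : Σ _ : Fin n, Fin n)) <;>
    simp [Finset.mem_sigma]

lemma prod_Ioi_perm {M : Type*} [CommMonoid M] {n : ℕ} (f : Fin n → Fin n → M)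
    (hf : ∀ i j, f i j = f j i) (σ : Equiv.Perm (Fin n)) :
    ∏ i : Fin n, ∏ j ∈ Ioi i, f (σ i) (σ j) = ∏ i : Fin n, ∏ j ∈ Ioi i, f i j := by
  rw [prod_Ioi_pairs, prod_Ioi_pairs]
  refine Finset.prod_nbij'
    (fun p => if σ p.1 < σ p.2 then (σ p.1, σ p.2) else (σ p.2, σ p.1))
    (fun q => if σ.symm q.1 < σ.symm q.2 then (σ.symm q.1, σ.symm q.2)
      else (σ.symm q.2, σ.symm q.1)) ?_ ?_ ?_ ?_ ?_
  · intro p hp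
    simp only [mem_filter, mem_product, mem_univ, true_and] at hp ⊢
    have hne : σ p.1 ≠ σ p.2 := fun h => absurd (σ.injective h) hp.ne
    rcases lt_or_gt_of_ne hne with h | h
    · simp [h]
    · simp [not_lt_of_gt h, h]
  · intro q hq
    simp only [mem_filter, mem_product, mem_univ, true_and] at hq ⊢
    have hne : σ.symm q.1 ≠ σ.symm q.2 := fun h => absurd (σ.symm.injective h) hq.ne
    rcases lt_or_gt_of_ne hne with h | h
    · simp [h]
    · simp [not_lt_of_gt h, h]
  · intro p hp
    simp only [mem_filter, mem_product, mem_univ, true_and] at hp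
    by_cases h : σ p.1 < σ p.2 <;> simp [h, hp, not_lt_of_gt, hp.le]
  · intro q hq
    simp only [mem_filter, mem_product, mem_univ, true_and] at hq
    by_cases h : σ.symm q.1 < σ.symm q.2 <;> simp [h, hq, not_lt_of_gt, hq.le]
  · intro p hp
    by_cases h : σ p.1 < σ p.2 <;> simp [h, hf]

lemma evalF_perm {K : Type*} [CommRing K] {n : ℕ}
    (P F : MvPolynomial (Fin n) K) (hP : P.IsSymmetric)
    (hF : F = P * (∏ p ∈ Finset.univ.offDiag, (MvPolynomial.X p.1 - MvPolynomial.X p.2)) *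
        ∏ i : Fin n, ∏ j ∈ Ioi i, (MvPolynomial.X i + MvPolynomial.X j))
    (σ : Equiv.Perm (Fin n)) (w : Fin n → K) :
    MvPolynomial.eval (w ∘ σ) F = MvPolynomial.eval w F := by
  subst hF
  simp only [map_mul]
  congr 1
  · congr 1
    · conv_rhs => rw [← hP σ]
      rw [MvPolynomial.eval_rename]
    · rw [MvPolynomial.eval_prod, MvPolynomial.eval_prod]
      refine Finset.prod_nbij' (fun p => (σ p.1, σ p.2)) (fun q => (σ.symm q.1, σ.symm q.2))
        ?_ ?_ ?_ ?_ ?_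
      · intro p hp
        simp only [mem_offDiag, mem_univ, true_and] at hp ⊢
        exact fun h => hp (σ.injective h)
      · intro q hq
        simp only [mem_offDiag, mem_univ, true_and] at hq ⊢
        exact fun h => hq (σ.symm.injective h)
      · intro p _; simp
      · intro q _; simp
      · intro p _; simp
  · simp only [MvPolynomial.eval_prod, map_add, MvPolynomial.eval_X, Function.comp]
    exact prod_Ioi_perm (fun i j => w i + w j) (fun i j => add_comm _ _) σ

lemma evalF_vanish {K : Type*} [CommRing K] {n : ℕ}
    (P F : MvPolynomial (Fin n) K)
    (hF : F = P * (∏ p ∈ Finset.univ.offDiag, (MvPolynomial.X p.1 - MvPolynomial.X p.2)) *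
        ∏ i : Fin n, ∏ j ∈ Ioi i, (MvPolynomial.X i + MvPolynomial.X j))
    (α : Fin n → K) (i j : Fin n) (hij : i ≠ j) (h : α i = α j ∨ α i = -α j) :
    MvPolynomial.eval α F = 0 := by
  subst hF
  simp only [map_mul]
  rcases h with h | h
  · apply mul_eq_zero_of_left; apply mul_eq_zero_of_right
    rw [MvPolynomial.eval_prod]
    refine Finset.prod_eq_zero (i := (i, j)) (by simp [mem_offDiag, hij]) ?_
    simp [h]
  · apply mul_eq_zero_of_right
    rw [MvPolynomial.eval_prod]
    rcases lt_or_gt_of_ne hij with hlt | hlt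
    · refine Finset.prod_eq_zero (mem_univ i) ?_
      rw [MvPolynomial.eval_prod]
      refine Finset.prod_eq_zero (i := j) (by simp [hlt]) ?_
      simp [h]
    · refine Finset.prod_eq_zero (mem_univ j) ?_
      rw [MvPolynomial.eval_prod]
      refine Finset.prod_eq_zero (i := i) (by simp [hlt]) ?_
      simp [h]

/-- Let `P` be a symmetric polynomial, set
`F = P · ∏_{i≠j}(x_i - x_j) · ∏_{i<j}(x_i + x_j)`, and let
`Q(x) = ∏_{i=1}^n (x - λ_i)(x + λ_i)`.  Then the sum, over all `n`-tuples `(α_1,…,α_n)` of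
roots of `Q`, of `F(α_1,…,α_n)/(Q'(α_1)⋯ Q'(α_n))` equals
`n! · Σ_{I ⊆ [n]} F(λ_I)/(Q'(λ_{1,I})⋯ Q'(λ_{n,I}))`. -/
theorem sum_tuples_eq_factorial_mul_sum_subsets
    {K : Type*} [Field K] [CharZero K] [DecidableEq K] (n : ℕ) (hn : 1 ≤ n)
    (lam : Fin n → K) (h0 : ∀ i, lam i ≠ 0)
    (hsq : ∀ i j, i ≠ j → lam i ^ 2 ≠ lam j ^ 2)
    (P : MvPolynomial (Fin n) K) (hP : P.IsSymmetric)
    (F : MvPolynomial (Fin n) K)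
    (hF : F = P * (∏ p ∈ Finset.univ.offDiag, (MvPolynomial.X p.1 - MvPolynomial.X p.2)) *
        ∏ i : Fin n, ∏ j ∈ Ioi i, (MvPolynomial.X i + MvPolynomial.X j))
    (Q : Polynomial K)
    (hQ : Q = ∏ i : Fin n,
        ((Polynomial.X - Polynomial.C (lam i)) * (Polynomial.X + Polynomial.C (lam i)))) :
    ∑ α ∈ Fintype.piFinset (fun _ : Fin n => Q.roots.toFinset),
        MvPolynomial.eval α F / ∏ i, (Polynomial.derivative Q).eval (α i)
      = (Nat.factorial n : K) *
          ∑ I : Finset (Fin n),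
            MvPolynomial.eval (fun i => if i ∈ I then lam i else -lam i) F /
              ∏ i : Fin n,
                (Polynomial.derivative Q).eval (if i ∈ I then lam i else -lam i) := by
  classical
  set d : K → K := fun x => (Polynomial.derivative Q).eval x with hd
  set t : (Fin n → K) → K := fun α => MvPolynomial.eval α F / ∏ i, d (α i) with ht
  set vI : Finset (Fin n) → Fin n → K := fun I i => if i ∈ I then lam i else -lam i with hvI
  -- basic facts
  have hQne : Q ≠ 0 := by
    rw [hQ]
    exact Finset.prod_ne_zero_iff.mpr fun i _ =>
      ((Polynomial.monic_X_sub_C _).mul (Polynomial.monic_X_add_C _)).ne_zero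
  have hmem : ∀ x : K, x ∈ Q.roots.toFinset ↔ ∃ j, x = lam j ∨ x = -lam j := by
    intro x
    rw [Multiset.mem_toFinset, Polynomial.mem_roots hQne, hQ]
    simp only [Polynomial.IsRoot, Polynomial.eval_prod, Finset.prod_eq_zero_iff,
      Polynomial.eval_mul, Polynomial.eval_sub, Polynomial.eval_add, Polynomial.eval_X,
      Polynomial.eval_C, mul_eq_zero, sub_eq_zero, add_eq_zero_iff_eq_neg, mem_univ, true_and]
  have hsq' : ∀ j k : Fin n, lam j ^ 2 = lam k ^ 2 → j = k := by
    intro j k h; by_contra hne; exact hsq j k hne h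
  have hneq : ∀ j : Fin n, lam j ≠ -lam j := by
    intro j h
    have h2 : (2 : K) * lam j = 0 := by linear_combination h
    exact h0 j (by simpa [two_ne_zero] using mul_eq_zero.mp h2)
  have hvIsq : ∀ (I : Finset (Fin n)) (i : Fin n), vI I i ^ 2 = lam i ^ 2 := by
    intro I i; by_cases h : i ∈ I <;> simp [hvI, h]
  -- the set of tuples and the goodness predicate
  set A := Fintype.piFinset (fun _ : Fin n => Q.roots.toFinset) with hA
  set good : (Fin n → K) → Prop := fun α => Function.Injective fun i => α i ^ 2 with hgood
  have hbad : ∀ α ∈ A.filter (fun α => ¬ good α), t α = 0 := by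
    intro α hα
    obtain ⟨-, hng⟩ := Finset.mem_filter.mp hα
    rw [hgood, Function.not_injective_iff] at hng
    obtain ⟨i, j, hij, hne⟩ := hng
    have hz : (α i - α j) * (α i + α j) = 0 := by linear_combination hij
    have hor : α i = α j ∨ α i = -α j := by
      rcases mul_eq_zero.mp hz with h | h
      · exact Or.inl (sub_eq_zero.mp h)
      · exact Or.inr (eq_neg_of_add_eq_zero_left h)
    rw [ht]
    simp only
    rw [evalF_vanish P F hF α i j hne hor, zero_div]
  have hsplit : ∑ α ∈ A, t α = ∑ α ∈ A.filter good, t α := by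
    rw [← Finset.sum_filter_add_sum_filter_not A good t,
      Finset.sum_eq_zero hbad, add_zero]
  -- the bijection
  have hbij : ∑ α ∈ A.filter good, t α
      = ∑ p : Equiv.Perm (Fin n) × Finset (Fin n), t (vI p.2 ∘ p.1) := by
    symm
    refine Finset.sum_bij (fun p _ => vI p.2 ∘ p.1) ?_ ?_ ?_ ?_
    · -- maps into
      rintro ⟨σ, I⟩ -
      rw [Finset.mem_filter]
      constructor
      · rw [hA, Fintype.mem_piFinset]
        intro i
        rw [hmem]
        exact ⟨σ i, by by_cases h : σ i ∈ I <;> simp [hvI, h]⟩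
      · intro i i' h
        simp only [Function.comp_apply] at h
        have : lam (σ i) ^ 2 = lam (σ i') ^ 2 := by
          rw [← hvIsq I (σ i), ← hvIsq I (σ i'), h]
        exact σ.injective (hsq' _ _ this)
    · -- injective
      rintro ⟨σ, I⟩ h1 ⟨σ', I'⟩ h2 h
      simp only at h
      have hσ : ∀ i, σ i = σ' i := by
        intro i
        have := congrFun h i
        simp only [Function.comp_apply] at this
        apply hsq' _ _
        rw [← hvIsq I (σ i), ← hvIsq I' (σ' i), this]
      have hσe : σ = σ' := Equiv.ext hσ
      subst hσe
      have hI : I = I' := by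
        ext j
        have := congrFun h (σ.symm j)
        simp only [Function.comp_apply, Equiv.apply_symm_apply, hvI] at this
        constructor
        · intro hj1
          by_contra hj2
          rw [if_pos hj1, if_neg hj2] at this
          exact hneq j this
        · intro hj2
          by_contra hj1
          rw [if_neg hj1, if_pos hj2] at this
          exact hneq j this.symm
      simp [hI]
    · -- surjective
      intro α hα
      obtain ⟨hαA, hαg⟩ := Finset.mem_filter.mp hα
      rw [hA, Fintype.mem_piFinset] at hαA
      have hc : ∀ i, ∃ j, α i = lam j ∨ α i = -lam j := fun i => (hmem _).mp (hαA i)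
      choose c hcspec using hc
      have hcsq : ∀ i, α i ^ 2 = lam (c i) ^ 2 := by
        intro i; rcases hcspec i with h | h <;> simp [h]
      have hcinj : Function.Injective c := by
        intro i i' h
        apply hαg
        show α i ^ 2 = α i' ^ 2
        rw [hcsq, hcsq, h]
      let σ : Equiv.Perm (Fin n) := Equiv.ofBijective c (Finite.injective_iff_bijective.mp hcinj)
      refine ⟨(σ, univ.filter fun j => α (σ.symm j) = lam j), Finset.mem_univ _, ?_⟩
      funext i
      have hσi : σ i = c i := rfl
      simp only [Function.comp_apply, hvI, hσi, Finset.mem_filter, Finset.mem_univ, true_and]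
      have hsymm : σ.symm (c i) = i := by
        rw [← hσi, Equiv.symm_apply_apply]
      rw [hsymm]
      rcases hcspec i with h | h
      · rw [if_pos h, h]
      · have hne : α i ≠ lam (c i) := by
          rw [h]; exact fun hh => (hneq (c i)) hh.symm
        rw [if_neg hne, h]
    · rintro ⟨σ, I⟩ -; rfl
  -- collapse the permutations
  have hperm : ∀ (σ : Equiv.Perm (Fin n)) (I : Finset (Fin n)), t (vI I ∘ σ) = t (vI I) := by
    intro σ I
    rw [ht]
    simp only
    rw [evalF_perm P F hP hF σ (vI I)]
    congr 1
    exact Equiv.prod_comp σ (fun i => d (vI I i))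
  calc ∑ α ∈ A, t α = ∑ p : Equiv.Perm (Fin n) × Finset (Fin n), t (vI p.2 ∘ p.1) := by
        rw [hsplit, hbij]
    _ = ∑ σ : Equiv.Perm (Fin n), ∑ I : Finset (Fin n), t (vI I) := by
        rw [Fintype.sum_prod_type]
        exact Finset.sum_congr rfl fun σ _ => Finset.sum_congr rfl fun I _ => hperm σ I
    _ = (Nat.factorial n : K) * ∑ I : Finset (Fin n), t (vI I) := by
        rw [Finset.sum_const, Finset.card_univ, Fintype.card_perm, Fintype.card_fin,
          nsmul_eq_mul]
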